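/- For a Poisson random variable X with mean μ > 0 and positive integer q ≥ 1, the conditional expectation E[X | X ≤ q-1] = μ·P(X ≤ q-2)/P(X ≤ q-1) is increasing in μ and bounded above by q-1. -/

import Mathlib

open scoped BigOperators

/-- The Poisson probability mass function with real mean parameter `μ`. -/
noncomputable def poissonPMF (μ : ℝ) (n : ℕ) : ℝ := Real.exp (-μ) * μ ^ n / n.factorial

/-- The conditional expectation `E[X | X ≤ q - 1]` for `X ~ Poisson(μ)`,
where `q` is a positive integer. -/
noncomputable def condExpLe (q : ℕ) (μ : ℝ) : ℝ :=
  (∑ n ∈ Finset.range q, (n : ℝ) * poissonPMF μ n) / (∑ n ∈ Finset.range q, poissonPMF μ n)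

noncomputable def TTaux (q : ℕ) (μ : ℝ) : ℝ := ∑ n ∈ Finset.range q, μ ^ n / n.factorial

noncomputable def NNaux (q : ℕ) (μ : ℝ) : ℝ :=
  ∑ n ∈ Finset.range q, (n : ℝ) * (μ ^ n / n.factorial)

lemma condExpLe_eq_aux (q : ℕ) (μ : ℝ) : condExpLe q μ = NNaux q μ / TTaux q μ := by
  unfold condExpLe NNaux TTaux
  have h1 : ∀ n : ℕ, (n : ℝ) * poissonPMF μ n
      = Real.exp (-μ) * ((n : ℝ) * (μ ^ n / n.factorial)) := by
    intro n; unfold poissonPMF; ring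
  have h2 : ∀ n : ℕ, poissonPMF μ n = Real.exp (-μ) * (μ ^ n / n.factorial) := by
    intro n; unfold poissonPMF; ring
  simp_rw [h1, h2, ← Finset.mul_sum]
  rw [mul_div_mul_left _ _ (Real.exp_ne_zero _)]

lemma TTaux_pos (q : ℕ) (hq : 1 ≤ q) {μ : ℝ} (hμ : 0 < μ) : 0 < TTaux q μ := by
  unfold TTaux
  apply Finset.sum_pos
  · intro n _; positivity
  · exact ⟨0, Finset.mem_range.2 hq⟩

lemma sum_pmf_pos (q : ℕ) (hq : 1 ≤ q) {μ : ℝ} (hμ : 0 < μ) :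
    0 < ∑ n ∈ Finset.range q, poissonPMF μ n := by
  apply Finset.sum_pos
  · intro n _; unfold poissonPMF; positivity
  · exact ⟨0, Finset.mem_range.2 hq⟩

lemma pow_cross {μ ν : ℝ} (h0 : 0 ≤ μ) (h : μ ≤ ν) {m n : ℕ} (hmn : n ≤ m) :
    μ ^ m * ν ^ n ≤ ν ^ m * μ ^ n := by
  obtain ⟨k, rfl⟩ := Nat.exists_eq_add_of_le hmn
  have h0ν : 0 ≤ ν := h0.trans h
  rw [pow_add, pow_add]
  nlinarith [mul_nonneg (pow_nonneg h0 n) (pow_nonneg h0ν n),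
    pow_le_pow_left₀ h0 h k, pow_nonneg h0 k, pow_nonneg h0ν k]

lemma term_nonneg {μ ν : ℝ} (h0 : 0 ≤ μ) (h : μ ≤ ν) (m n : ℕ) :
    0 ≤ ((m : ℝ) - n) * (ν ^ m * μ ^ n - μ ^ m * ν ^ n) := by
  rcases le_total n m with hmn | hmn
  · apply mul_nonneg
    · have : (n : ℝ) ≤ m := Nat.cast_le.2 hmn
      linarith
    · have := pow_cross h0 h hmn
      linarith
  · have h1 : (m : ℝ) ≤ n := Nat.cast_le.2 hmn
    have h2 := pow_cross h0 h hmn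
    nlinarith [h1, h2]

lemma cross (q : ℕ) {μ ν : ℝ} (h0 : 0 ≤ μ) (h : μ ≤ ν) :
    NNaux q μ * TTaux q ν ≤ NNaux q ν * TTaux q μ := by
  set G : ℕ → ℕ → ℝ := fun m n =>
    (m : ℝ) * (ν ^ m * μ ^ n - μ ^ m * ν ^ n) / (m.factorial * n.factorial) with hG
  have key : NNaux q ν * TTaux q μ - NNaux q μ * TTaux q ν
      = ∑ m ∈ Finset.range q, ∑ n ∈ Finset.range q, G m n := by
    unfold NNaux TTaux
    rw [Finset.sum_mul_sum, Finset.sum_mul_sum, ← Finset.sum_sub_distrib]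
    refine Finset.sum_congr rfl fun m _ => ?_
    rw [← Finset.sum_sub_distrib]
    refine Finset.sum_congr rfl fun n _ => ?_
    simp only [hG]
    ring
  have hswap : ∑ m ∈ Finset.range q, ∑ n ∈ Finset.range q, G m n
      = ∑ m ∈ Finset.range q, ∑ n ∈ Finset.range q, G n m := Finset.sum_comm
  have h2S : 0 ≤ ∑ m ∈ Finset.range q, ∑ n ∈ Finset.range q, (G m n + G n m) := by
    apply Finset.sum_nonneg
    intro m _
    apply Finset.sum_nonneg
    intro n _
    have heq : G m n + G n m
        = ((m : ℝ) - n) * (ν ^ m * μ ^ n - μ ^ m * ν ^ n) / (m.factorial * n.factorial) := by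
      simp only [hG]
      ring
    rw [heq]
    apply div_nonneg (term_nonneg h0 h m n)
    positivity
  have hsum : ∑ m ∈ Finset.range q, ∑ n ∈ Finset.range q, (G m n + G n m)
      = (∑ m ∈ Finset.range q, ∑ n ∈ Finset.range q, G m n)
        + ∑ m ∈ Finset.range q, ∑ n ∈ Finset.range q, G n m := by
    rw [← Finset.sum_add_distrib]
    exact Finset.sum_congr rfl fun m _ => Finset.sum_add_distrib
  rw [hsum, ← hswap] at h2S
  linarith [key ▸ h2S]

lemma succ_term (μ : ℝ) (i : ℕ) :
    ((i : ℕ) + 1 : ℕ) * poissonPMF μ (i + 1) = μ * poissonPMF μ i := by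
  unfold poissonPMF
  rw [Nat.factorial_succ]
  have hi : (i.factorial : ℝ) ≠ 0 := Nat.cast_ne_zero.2 i.factorial_ne_zero
  have hi1 : ((i : ℝ) + 1) ≠ 0 := by positivity
  push_cast
  field_simp
  ring

lemma numerator_eq (q : ℕ) (hq : 1 ≤ q) (μ : ℝ) :
    ∑ n ∈ Finset.range q, (n : ℝ) * poissonPMF μ n
      = μ * ∑ n ∈ Finset.range (q - 1), poissonPMF μ n := by
  obtain ⟨p, rfl⟩ : ∃ p, q = p + 1 := ⟨q - 1, (Nat.succ_pred_eq_of_pos hq).symm⟩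
  rw [Finset.sum_range_succ']
  simp only [Nat.cast_zero, zero_mul, add_zero, Nat.add_sub_cancel]
  rw [Finset.mul_sum]
  refine Finset.sum_congr rfl fun i _ => ?_
  have := succ_term μ i
  push_cast at this ⊢
  linarith [this]

theorem stmt7 (q : ℕ) (hq : 1 ≤ q) :
    (∀ μ : ℝ, 0 < μ →
        condExpLe q μ =
          μ * (∑ n ∈ Finset.range (q - 1), poissonPMF μ n) /
            (∑ n ∈ Finset.range q, poissonPMF μ n)) ∧
      MonotoneOn (condExpLe q) (Set.Ioi 0) ∧
      (∀ μ : ℝ, 0 < μ → condExpLe q μ ≤ (q : ℝ) - 1) := by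
  refine ⟨?_, ?_, ?_⟩
  · intro μ hμ
    unfold condExpLe
    rw [numerator_eq q hq μ]
  · intro μ hμ ν hν hμν
    simp only [Set.mem_Ioi] at hμ hν
    rw [condExpLe_eq_aux, condExpLe_eq_aux]
    rw [div_le_div_iff₀ (TTaux_pos q hq hμ) (TTaux_pos q hq hν)]
    exact cross q hμ.le hμν
  · intro μ hμ
    unfold condExpLe
    rw [div_le_iff₀ (sum_pmf_pos q hq hμ)]
    have : ((q : ℝ) - 1) * ∑ n ∈ Finset.range q, poissonPMF μ n
        = ∑ n ∈ Finset.range q, ((q : ℝ) - 1) * poissonPMF μ n := Finset.mul_sum _ _ _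
    rw [this]
    apply Finset.sum_le_sum
    intro n hn
    apply mul_le_mul_of_nonneg_right
    · have hnq : n + 1 ≤ q := Finset.mem_range.1 hn
      have : ((n : ℝ) + 1) ≤ q := by exact_mod_cast hnq
      linarith
    · unfold poissonPMF; positivity
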